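/- arXiv:2309.01368 — 5 statements merged into one kernel-verified Lean document; each statement's English description precedes it below -/
import Mathlib

section
/- Let Z, E, W be real Banach spaces, let z₀ ∈ Z, let ψ: Z → ℝ, F: Z → E and G: Z → W be continuously Fréchet differentiable in a neighborhood of z₀, let K ⊆ W be a closed convex set with nonempty interior, and assume that the range DF(z₀)(Z) is a closed subspace of E. If z₀ is a local minimizer of ψ on the set {z ∈ Z : F(z) = 0 and G(z) ∈ K} (in particular F(z₀) = 0 and G(z₀) ∈ K), then there exist a real number λ ≥ 0 and continuous linear functionals e* on E and w* on W, with (λ, e*, w*) ≠ (0, 0, 0), such that λ·Dψ(z₀) + e* ∘ DF(z₀) + w* ∘ DG(z₀) = 0 as a continuous linear functional on Z, and w* ∈ N(K, G(z₀)). -/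
/-- A nonzero continuous functional vanishing on a proper closed subspace. -/
lemma aux_exists_annihilator {E : Type*} [NormedAddCommGroup E] [NormedSpace ℝ E]
    (S : Submodule ℝ E) (hS : IsClosed (S : Set E)) (hne : S ≠ ⊤) :
    ∃ e : E →L[ℝ] ℝ, e ≠ 0 ∧ ∀ x ∈ S, e x = 0 := by
  obtain ⟨x, hx⟩ : ∃ x, x ∉ S := by
    by_contra h; push_neg at h; exact hne (Submodule.eq_top_iff'.2 h)
  obtain ⟨f, u, hfS, hfx⟩ := geometric_hahn_banach_closed_point S.convex hS hx
  have h0 : (0:ℝ) < u := by simpa using hfS 0 S.zero_mem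
  have hvan : ∀ y ∈ S, f y = 0 := by
    intro y hy
    by_contra hne0
    have h1 : f ((2 * u / f y) • y) < u := hfS _ (S.smul_mem _ hy)
    rw [map_smul] at h1
    rw [smul_eq_mul, div_mul_cancel₀] at h1
    · linarith
    · exact hne0
  refine ⟨f, ?_, hvan⟩
  intro hf0
  have : f x = 0 := by rw [hf0]; rfl
  linarith
/-- Factor a functional vanishing on the kernel of a surjective operator. -/
lemma aux_factor {Z E : Type*}
    [NormedAddCommGroup Z] [NormedSpace ℝ Z] [CompleteSpace Z]
    [NormedAddCommGroup E] [NormedSpace ℝ E] [CompleteSpace E]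
    (B : Z →L[ℝ] E) (hsurj : LinearMap.range (B : Z →ₗ[ℝ] E) = ⊤) (g : Z →L[ℝ] ℝ)
    (hg : ∀ z, B z = 0 → g z = 0) : ∃ e : E →L[ℝ] ℝ, e.comp B = g := by
  obtain ⟨σ, -⟩ := B.exists_nonlinearRightInverse_of_surjective hsurj
  have hdiff : ∀ (y : E) (z : Z), B z = y → g z = g (σ y) := by
    intro y z hz
    have : g (z - σ y) = 0 := hg _ (by simp [map_sub, hz])
    rw [map_sub, sub_eq_zero] at this; exact this
  let e₀ : E →ₗ[ℝ] ℝ :=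
    { toFun := fun y => g (σ y)
      map_add' := fun y y' => by
        show g (σ (y + y')) = g (σ y) + g (σ y')
        rw [← (hdiff (y + y') (σ y + σ y') (by simp)), map_add]
      map_smul' := fun c y => by
        show g (σ (c • y)) = c • g (σ y)
        rw [← (hdiff (c • y) (c • σ y) (by simp)), map_smul] }
  refine ⟨LinearMap.mkContinuous e₀ (‖g‖ * σ.nnnorm) (fun y => ?_), ?_⟩
  · calc ‖g (σ y)‖ ≤ ‖g‖ * ‖σ y‖ := g.le_opNorm _
      _ ≤ ‖g‖ * (σ.nnnorm * ‖y‖) := by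
          exact mul_le_mul_of_nonneg_left (σ.bound y) (norm_nonneg g)
      _ = ‖g‖ * σ.nnnorm * ‖y‖ := by ring
  · ext z
    exact (hdiff (B z) z rfl).symm
set_option maxHeartbeats 1000000 in
lemma aux_no_descent {Z E W : Type*}
    [NormedAddCommGroup Z] [NormedSpace ℝ Z] [CompleteSpace Z]
    [NormedAddCommGroup E] [NormedSpace ℝ E] [CompleteSpace E]
    [NormedAddCommGroup W] [NormedSpace ℝ W]
    (z₀ : Z) (ψ : Z → ℝ) (F : Z → E) (G : Z → W) (K : Set W)
    (hψ : ContDiffAt ℝ 1 ψ z₀) (hF : ContDiffAt ℝ 1 F z₀) (hG : ContDiffAt ℝ 1 G z₀)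
    (hKconv : Convex ℝ K)
    (hsurj : LinearMap.range (fderiv ℝ F z₀ : Z →ₗ[ℝ] E) = ⊤)
    (hmin : IsLocalMinOn ψ {z : Z | F z = 0 ∧ G z ∈ K} z₀)
    (hF₀ : F z₀ = 0) (hG₀ : G z₀ ∈ K)
    (h : Z) (hBh : fderiv ℝ F z₀ h = 0)
    (hint : G z₀ + fderiv ℝ G z₀ h ∈ interior K) :
    0 ≤ fderiv ℝ ψ z₀ h := by
  obtain ⟨A, hA_def⟩ : ∃ A : Z →L[ℝ] ℝ, fderiv ℝ ψ z₀ = A := ⟨_, rfl⟩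
  obtain ⟨B, hB_def⟩ : ∃ B : Z →L[ℝ] E, fderiv ℝ F z₀ = B := ⟨_, rfl⟩
  obtain ⟨C, hC_def⟩ : ∃ C : Z →L[ℝ] W, fderiv ℝ G z₀ = C := ⟨_, rfl⟩
  rw [hB_def] at hsurj hBh
  rw [hC_def] at hint
  rw [hA_def]
  by_contra hA
  push_neg at hA
  obtain ⟨a, ha, ha_def⟩ : ∃ a : ℝ, 0 < a ∧ A h = -a := ⟨-(A h), by linarith, by ring⟩
  -- ball inside K around the interior point
  obtain ⟨ρ, ρpos, hball⟩ := Metric.isOpen_iff.1 isOpen_interior _ hint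
  have hballK : Metric.ball (G z₀ + C h) ρ ⊆ K := hball.trans interior_subset
  -- local minimality radius
  obtain ⟨δ₀, δ₀pos, hδ₀⟩ := Metric.mem_nhdsWithin_iff.1 hmin
  -- Graves setup
  obtain ⟨σ, hσpos⟩ := B.exists_nonlinearRightInverse_of_surjective hsurj
  obtain ⟨M, hM_def⟩ : ∃ M : ℝ, (σ.nnnorm : ℝ) = M := ⟨_, rfl⟩
  have hMpos : (0:ℝ) < M := by rw [← hM_def]; exact_mod_cast hσpos
  obtain ⟨c, hc⟩ : ∃ c : NNReal, (c : ℝ) = (2 * M)⁻¹ :=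
    ⟨⟨(2 * M)⁻¹, by positivity⟩, rfl⟩
  have hcpos : (0:ℝ) < (c:ℝ) := by rw [hc]; positivity
  have hFs : HasStrictFDerivAt F B z₀ := hB_def ▸ hF.hasStrictFDerivAt one_ne_zero
  obtain ⟨s, hs_nhds, hs_approx⟩ :=
    hFs.approximates_deriv_on_nhds (Or.inr (show 0 < c by exact_mod_cast hcpos))
  obtain ⟨ρF, ρFpos, hρF⟩ := Metric.mem_nhds_iff.1 hs_nhds
  -- constants
  obtain ⟨nh, hnh, hnh_ge⟩ : ∃ nh : ℝ, 0 < nh ∧ ‖h‖ + 1 ≤ nh := ⟨‖h‖ + 1, by positivity, le_rfl⟩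
  have hnh_h : ‖h‖ ≤ nh - 1 := by linarith
  obtain ⟨ε', hε'pos, hε'le1, hε'A, hε'C⟩ :
      ∃ ε' : ℝ, 0 < ε' ∧ ε' ≤ 1 ∧ ‖A‖ * ε' ≤ a / 4 ∧ ‖C‖ * ε' ≤ ρ / 4 := by
    refine ⟨min 1 (min (a / (4 * (‖A‖ + 1))) (ρ / (4 * (‖C‖ + 1)))),
      lt_min one_pos (lt_min (by positivity) (by positivity)), min_le_left _ _, ?_, ?_⟩
    · have h1 : min 1 (min (a / (4 * (‖A‖ + 1))) (ρ / (4 * (‖C‖ + 1)))) ≤ a / (4 * (‖A‖ + 1)) :=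
        le_trans (min_le_right _ _) (min_le_left _ _)
      have h2 : (0:ℝ) ≤ ‖A‖ := norm_nonneg _
      have h4 : (0:ℝ) < min 1 (min (a / (4 * (‖A‖ + 1))) (ρ / (4 * (‖C‖ + 1)))) :=
        lt_min one_pos (lt_min (by positivity) (by positivity))
      rw [le_div_iff₀ (by positivity)] at h1
      nlinarith
    · have h1 : min 1 (min (a / (4 * (‖A‖ + 1))) (ρ / (4 * (‖C‖ + 1)))) ≤ ρ / (4 * (‖C‖ + 1)) :=
        le_trans (min_le_right _ _) (min_le_right _ _)
      have h2 : (0:ℝ) ≤ ‖C‖ := norm_nonneg _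
      have h4 : (0:ℝ) < min 1 (min (a / (4 * (‖A‖ + 1))) (ρ / (4 * (‖C‖ + 1)))) :=
        lt_min one_pos (lt_min (by positivity) (by positivity))
      rw [le_div_iff₀ (by positivity)] at h1
      nlinarith
  obtain ⟨κ, hκpos, hκ⟩ : ∃ κ : ℝ, 0 < κ ∧ κ = 2 * M := ⟨2 * M, by positivity, rfl⟩
  obtain ⟨εF, hεFpos, hεFκ⟩ : ∃ εF : ℝ, 0 < εF ∧ κ * εF = ε' :=
    ⟨ε' / κ, by positivity, by field_simp⟩
  obtain ⟨εψ, hεψpos, hεψ⟩ : ∃ εψ : ℝ, 0 < εψ ∧ εψ * nh = a / 4 :=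
    ⟨a / 4 / nh, by positivity, by field_simp⟩
  obtain ⟨εG, hεGpos, hεG⟩ : ∃ εG : ℝ, 0 < εG ∧ εG * nh = ρ / 4 :=
    ⟨ρ / 4 / nh, by positivity, by field_simp⟩
  obtain ⟨cF, hcFpos, hcF⟩ : ∃ cF : ℝ, 0 < cF ∧ cF * nh = εF :=
    ⟨εF / nh, by positivity, by field_simp⟩
  -- little-o bounds
  have hψd : HasFDerivAt ψ A z₀ := hA_def ▸ (hψ.differentiableAt one_ne_zero).hasFDerivAt
  have hGd : HasFDerivAt G C z₀ := hC_def ▸ (hG.differentiableAt one_ne_zero).hasFDerivAt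
  have hFd : HasFDerivAt F B z₀ := hB_def ▸ (hF.differentiableAt one_ne_zero).hasFDerivAt
  obtain ⟨δψ, δψpos, hδψ⟩ := Metric.eventually_nhds_iff.1 (hψd.isLittleO.def hεψpos)
  obtain ⟨δG, δGpos, hδG⟩ := Metric.eventually_nhds_iff.1 (hGd.isLittleO.def hεGpos)
  obtain ⟨δF, δFpos, hδF⟩ := Metric.eventually_nhds_iff.1 (hFd.isLittleO.def hcFpos)
  -- choose t
  obtain ⟨t, htpos, ht1, htδF, htρF, htδψ, htδG, htδ₀⟩ :
      ∃ t : ℝ, 0 < t ∧ t ≤ 1 ∧ t * nh < δF ∧ t * nh < ρF ∧ t * nh < δψ ∧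
        t * nh < δG ∧ t * nh < δ₀ := by
    set T : ℝ := min 1 (min (δF / nh) (min (ρF / nh) (min (δψ / nh) (min (δG / nh) (δ₀ / nh)))))
      with hT
    have hTpos : 0 < T :=
      lt_min one_pos (lt_min (by positivity) (lt_min (by positivity)
        (lt_min (by positivity) (lt_min (by positivity) (by positivity)))))
    have key : ∀ d : ℝ, T ≤ d / nh → T / 2 * nh < d := by
      intro d hd
      have h1 : T * nh ≤ d := (le_div_iff₀ hnh).1 hd
      have h2 : 0 < T * nh := mul_pos hTpos hnh
      linarith
    refine ⟨T / 2, by positivity, ?_, ?_, ?_, ?_, ?_, ?_⟩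
    · have := min_le_left 1 (min (δF / nh) (min (ρF / nh) (min (δψ / nh)
        (min (δG / nh) (δ₀ / nh)))))
      rw [← hT] at this; linarith
    · exact key _ (le_trans (min_le_right _ _) (min_le_left _ _))
    · exact key _ (le_trans (min_le_right _ _) (le_trans (min_le_right _ _) (min_le_left _ _)))
    · exact key _ (le_trans (min_le_right _ _) (le_trans (min_le_right _ _)
        (le_trans (min_le_right _ _) (min_le_left _ _))))
    · exact key _ (le_trans (min_le_right _ _) (le_trans (min_le_right _ _)
        (le_trans (min_le_right _ _) (le_trans (min_le_right _ _) (min_le_left _ _)))))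
    · exact key _ (le_trans (min_le_right _ _) (le_trans (min_le_right _ _)
        (le_trans (min_le_right _ _) (le_trans (min_le_right _ _) (min_le_right _ _)))))
  have hth : t * ‖h‖ < t * nh := mul_lt_mul_of_pos_left (by linarith) htpos
  obtain ⟨b, hb_def⟩ : ∃ b : Z, z₀ + t • h = b := ⟨_, rfl⟩
  have hbz₀ : ‖b - z₀‖ = t * ‖h‖ := by
    rw [← hb_def, add_sub_cancel_left, norm_smul, Real.norm_eq_abs, abs_of_pos htpos]
  -- bound on ‖F b‖
  have hFb : ‖F b‖ ≤ εF * t := by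
    have hdist : dist b z₀ < δF := by rw [dist_eq_norm, hbz₀]; linarith
    have hb2 := hδF hdist
    have heq : F b - F z₀ - B (b - z₀) = F b := by
      rw [← hb_def, add_sub_cancel_left, map_smul, hBh, hF₀]; simp
    rw [heq, hbz₀] at hb2
    calc ‖F b‖ ≤ cF * (t * ‖h‖) := hb2
      _ ≤ cF * (t * nh) := mul_le_mul_of_nonneg_left (by linarith) hcFpos.le
      _ = εF * t := by rw [← hcF]; ring
  obtain ⟨r, hr_def⟩ : ∃ r : ℝ, κ * εF * t = r := ⟨_, rfl⟩
  have hr_eq : r = ε' * t := by rw [← hr_def, hεFκ]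
  have hrpos : 0 < r := by rw [hr_eq]; positivity
  have hsub : Metric.closedBall b r ⊆ s := by
    intro x hx
    apply hρF
    rw [Metric.mem_closedBall] at hx
    rw [Metric.mem_ball]
    calc dist x z₀ ≤ dist x b + dist b z₀ := dist_triangle _ _ _
      _ ≤ r + t * ‖h‖ := add_le_add hx (le_of_eq (by rw [dist_eq_norm, hbz₀]))
      _ = ε' * t + t * ‖h‖ := by rw [hr_eq]
      _ ≤ 1 * t + t * (nh - 1) := by gcongr
      _ = t * nh := by ring
      _ < ρF := htρF
  have hsurjon := hs_approx.surjOn_closedBall_of_nonlinearRightInverse σ hrpos.le hsub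
  have harith : ((σ.nnnorm:ℝ)⁻¹ - (c:ℝ)) * r = εF * t := by
    rw [hM_def, hc, ← hr_def, hκ]
    have h1 : M⁻¹ - (2 * M)⁻¹ = (2 * M)⁻¹ := by
      field_simp
      ring
    rw [h1]
    field_simp
  have h0mem : (0:E) ∈ Metric.closedBall (F b) (((σ.nnnorm:ℝ)⁻¹ - (c:ℝ)) * r) := by
    rw [Metric.mem_closedBall, dist_zero_left, harith]
    exact hFb
  obtain ⟨z, hz_ball, hz_F⟩ := hsurjon h0mem
  rw [Metric.mem_closedBall] at hz_ball
  have hzb : ‖z - b‖ ≤ ε' * t := by rw [← hr_eq, ← dist_eq_norm]; exact hz_ball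
  have hzdecomp : z - z₀ = (z - b) + t • h := by rw [← hb_def]; abel
  have hdz : ‖z - z₀‖ ≤ t * nh := by
    rw [hzdecomp]
    calc ‖(z - b) + t • h‖ ≤ ‖z - b‖ + ‖t • h‖ := norm_add_le _ _
      _ ≤ ε' * t + t * ‖h‖ := by
          rw [norm_smul, Real.norm_eq_abs, abs_of_pos htpos]; linarith
      _ ≤ 1 * t + t * (nh - 1) := by gcongr
      _ = t * nh := by ring
  -- ψ decreases
  have hψlt : ψ z < ψ z₀ := by
    have hdist : dist z z₀ < δψ := by rw [dist_eq_norm]; linarith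
    have hbound := hδψ hdist
    have h1 : ‖ψ z - ψ z₀ - A (z - z₀)‖ ≤ a / 4 * t := by
      calc ‖ψ z - ψ z₀ - A (z - z₀)‖ ≤ εψ * ‖z - z₀‖ := hbound
        _ ≤ εψ * (t * nh) := by gcongr
        _ = a / 4 * t := by rw [show εψ * (t * nh) = εψ * nh * t by ring, hεψ]
    have h3 : A (z - z₀) = A (z - b) + t * A h := by
      rw [hzdecomp, map_add, map_smul, smul_eq_mul]
    have h4 : |A (z - b)| ≤ a / 4 * t := by
      calc |A (z - b)| ≤ ‖A‖ * ‖z - b‖ := A.le_opNorm _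
        _ ≤ ‖A‖ * (ε' * t) := by gcongr
        _ = ‖A‖ * ε' * t := by ring
        _ ≤ a / 4 * t := mul_le_mul_of_nonneg_right hε'A htpos.le
    rw [Real.norm_eq_abs] at h1
    have h6 := abs_le.1 h1
    have h7 := abs_le.1 h4
    rw [h3, ha_def] at h6
    have hat : 0 < a * t := mul_pos ha htpos
    linarith
  -- G z ∈ K
  have hGz : G z ∈ K := by
    have hdist : dist z z₀ < δG := by rw [dist_eq_norm]; linarith
    have hbound := hδG hdist
    have h1 : ‖G z - G z₀ - C (z - z₀)‖ ≤ ρ / 4 * t := by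
      calc ‖G z - G z₀ - C (z - z₀)‖ ≤ εG * ‖z - z₀‖ := hbound
        _ ≤ εG * (t * nh) := by gcongr
        _ = ρ / 4 * t := by rw [show εG * (t * nh) = εG * nh * t by ring, hεG]
    obtain ⟨err, herr_def⟩ : ∃ err : W, G z - G z₀ - t • C h = err := ⟨_, rfl⟩
    have herr_decomp : err = (G z - G z₀ - C (z - z₀)) + C (z - b) := by
      rw [← herr_def, hzdecomp, map_add, map_smul]; abel
    have herr_bound : ‖err‖ ≤ ρ / 2 * t := by
      rw [herr_decomp]
      calc ‖(G z - G z₀ - C (z - z₀)) + C (z - b)‖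
          ≤ ‖G z - G z₀ - C (z - z₀)‖ + ‖C (z - b)‖ := norm_add_le _ _
        _ ≤ ρ / 4 * t + ‖C‖ * (ε' * t) := by
            have h3 : ‖C (z - b)‖ ≤ ‖C‖ * (ε' * t) :=
              le_trans (C.le_opNorm _) (by gcongr)
            linarith
        _ ≤ ρ / 2 * t := by
            have h4 : ‖C‖ * (ε' * t) = ‖C‖ * ε' * t := by ring
            have h5 := mul_le_mul_of_nonneg_right hε'C htpos.le
            rw [h4]; linarith
    have hmem2 : (G z₀ + C h) + t⁻¹ • err ∈ Metric.ball (G z₀ + C h) ρ := by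
      rw [Metric.mem_ball, dist_self_add_left, norm_smul, Real.norm_eq_abs,
        abs_of_pos (inv_pos.2 htpos)]
      have hinv : 0 < t⁻¹ := inv_pos.2 htpos
      calc t⁻¹ * ‖err‖ ≤ t⁻¹ * (ρ / 2 * t) := by gcongr
        _ = ρ / 2 := by field_simp
        _ < ρ := by linarith
    have hcombo : (1 - t) • (G z₀) + t • ((G z₀ + C h) + t⁻¹ • err) = G z := by
      rw [smul_add, smul_smul, mul_inv_cancel₀ htpos.ne', one_smul, sub_smul, one_smul,
        smul_add, ← herr_def]
      abel
    rw [← hcombo]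
    exact hKconv hG₀ (hballK hmem2) (by linarith) htpos.le (by ring)
  -- contradiction
  have hzmem : z ∈ Metric.ball z₀ δ₀ ∩ {z : Z | F z = 0 ∧ G z ∈ K} := by
    refine ⟨?_, hz_F, hGz⟩
    rw [Metric.mem_ball, dist_eq_norm]; linarith
  have hcontra := hδ₀ hzmem
  simp only [Set.mem_setOf_eq] at hcontra
  linarith

set_option maxHeartbeats 1000000 in
/-- Fritz-John type first-order necessary optimality conditions
for a local minimizer of `ψ` subject to `F z = 0` and `G z ∈ K`, assuming the
range of `DF(z₀)` is a closed subspace. -/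
theorem stmt0
    {Z E W : Type*}
    [NormedAddCommGroup Z] [NormedSpace ℝ Z] [CompleteSpace Z]
    [NormedAddCommGroup E] [NormedSpace ℝ E] [CompleteSpace E]
    [NormedAddCommGroup W] [NormedSpace ℝ W] [CompleteSpace W]
    (z₀ : Z) (ψ : Z → ℝ) (F : Z → E) (G : Z → W) (K : Set W)
    (hψ : ContDiffAt ℝ 1 ψ z₀) (hF : ContDiffAt ℝ 1 F z₀) (hG : ContDiffAt ℝ 1 G z₀)
    (hKclosed : IsClosed K) (hKconv : Convex ℝ K) (hKint : (interior K).Nonempty)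
    (hrange : IsClosed (Set.range (fderiv ℝ F z₀) : Set E))
    (hmin : IsLocalMinOn ψ {z : Z | F z = 0 ∧ G z ∈ K} z₀)
    (hF₀ : F z₀ = 0) (hG₀ : G z₀ ∈ K) :
    ∃ (lam : ℝ) (e : E →L[ℝ] ℝ) (w : W →L[ℝ] ℝ),
      0 ≤ lam ∧
      (lam, e, w) ≠ (0, 0, 0) ∧
      lam • (fderiv ℝ ψ z₀) + e.comp (fderiv ℝ F z₀) + w.comp (fderiv ℝ G z₀) = 0 ∧
      (∀ k ∈ K, w (k - G z₀) ≤ 0) := by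
  by_cases hsurj : LinearMap.range (fderiv ℝ F z₀ : Z →ₗ[ℝ] E) = ⊤
  case neg =>
    -- the range of DF(z₀) is a proper closed subspace: annihilate it
    have hclosed : IsClosed ((LinearMap.range (fderiv ℝ F z₀ : Z →ₗ[ℝ] E) : Submodule ℝ E) : Set E) := by
      have hco : ((LinearMap.range (fderiv ℝ F z₀ : Z →ₗ[ℝ] E) : Submodule ℝ E) : Set E)
          = Set.range (fderiv ℝ F z₀) := by
        ext x; simp [LinearMap.mem_range]
      rwa [hco]
    obtain ⟨e, he_ne, he_van⟩ := aux_exists_annihilator _ hclosed hsurj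
    refine ⟨0, e, 0, le_rfl, ?_, ?_, ?_⟩
    · simp only [ne_eq, Prod.mk.injEq, not_and]
      intro _ he
      exact absurd he he_ne
    · ext z
      simp only [ContinuousLinearMap.add_apply, ContinuousLinearMap.coe_smul',
        Pi.smul_apply, ContinuousLinearMap.comp_apply, ContinuousLinearMap.zero_apply,
        ContinuousLinearMap.coe_comp', Function.comp_apply]
      rw [he_van ((fderiv ℝ F z₀) z) (LinearMap.mem_range_self _ z)]
      simp
    · intro k _
      simp
  case pos =>
    obtain ⟨A, hA_def⟩ : ∃ A : Z →L[ℝ] ℝ, fderiv ℝ ψ z₀ = A := ⟨_, rfl⟩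
    obtain ⟨B, hB_def⟩ : ∃ B : Z →L[ℝ] E, fderiv ℝ F z₀ = B := ⟨_, rfl⟩
    obtain ⟨C, hC_def⟩ : ∃ C : Z →L[ℝ] W, fderiv ℝ G z₀ = C := ⟨_, rfl⟩
    rw [hA_def, hB_def, hC_def]
    rw [hB_def] at hsurj
    have key : ∀ h : Z, B h = 0 → G z₀ + C h ∈ interior K → 0 ≤ A h := by
      intro h h1 h2
      have := aux_no_descent z₀ ψ F G K hψ hF hG hKconv (hB_def ▸ hsurj) hmin hF₀ hG₀ h
        (by rw [hB_def]; exact h1) (by rw [hC_def]; exact h2)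
      rwa [hA_def] at this
    -- separation
    have hPconv : Convex ℝ ((Set.Iio (0:ℝ)) ×ˢ interior K) := (convex_Iio 0).prod hKconv.interior
    have hPopen : IsOpen ((Set.Iio (0:ℝ)) ×ˢ interior K) := isOpen_Iio.prod isOpen_interior
    have hQconv : Convex ℝ ((fun h : Z => ((A h : ℝ), G z₀ + C h)) '' {h | B h = 0}) := by
      rintro p ⟨h₁, hh₁, rfl⟩ q ⟨h₂, hh₂, rfl⟩ sa sb hsa hsb hsab
      have hb₁ : B h₁ = 0 := hh₁
      have hb₂ : B h₂ = 0 := hh₂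
      refine ⟨sa • h₁ + sb • h₂, ?_, ?_⟩
      · show B (sa • h₁ + sb • h₂) = 0
        rw [map_add, map_smul, map_smul, hb₁, hb₂, smul_zero, smul_zero, add_zero]
      · have hGcombo : G z₀ = sa • G z₀ + sb • G z₀ := by
          rw [← add_smul, hsab, one_smul]
        simp only [map_add, map_smul, Prod.smul_mk, Prod.mk_add_mk, Prod.mk.injEq]
        constructor
        · simp [smul_eq_mul]
        · rw [smul_add, smul_add]
          nth_rewrite 1 [hGcombo]
          abel
    have hdisj : Disjoint ((Set.Iio (0:ℝ)) ×ˢ interior K)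
        ((fun h : Z => ((A h : ℝ), G z₀ + C h)) '' {h | B h = 0}) := by
      rw [Set.disjoint_left]
      rintro p ⟨hp1, hp2⟩ ⟨h, hh, rfl⟩
      exact absurd (key h hh hp2) (not_le.2 hp1)
    obtain ⟨f, u, hfP, hfQ⟩ := geometric_hahn_banach_open hPconv hPopen hQconv hdisj
    obtain ⟨lam, hlam⟩ : ∃ lam : ℝ, f (1, 0) = lam := ⟨_, rfl⟩
    obtain ⟨w, hw_app⟩ : ∃ w : W →L[ℝ] ℝ, ∀ y, w y = f (0, y) :=
      ⟨f.comp (ContinuousLinearMap.inr ℝ ℝ W), fun y => rfl⟩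
    have hf_eq : ∀ (r : ℝ) (y : W), f (r, y) = r * lam + w y := by
      intro r y
      have hsplit : (r, y) = r • ((1:ℝ), (0:W)) + ((0:ℝ), y) := by
        simp [Prod.ext_iff]
      rw [hsplit, map_add, map_smul, smul_eq_mul, hlam, hw_app]
    -- basic consequences
    obtain ⟨y₀, hy₀⟩ := hKint
    have hP_mem : ∀ (r : ℝ), r < 0 → ∀ y ∈ interior K, r * lam + w y < u := by
      intro r hr y hy
      rw [← hf_eq]
      exact hfP _ ⟨hr, hy⟩
    have hQ_mem : ∀ h : Z, B h = 0 → u ≤ A h * lam + (w (G z₀) + w (C h)) := by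
      intro h hh
      have hm := hfQ _ ⟨h, hh, rfl⟩
      rwa [hf_eq, map_add] at hm
    -- λ ≥ 0
    have hlam_nonneg : 0 ≤ lam := by
      by_contra hneg
      push_neg at hneg
      have hr_neg : min (-1) ((u - w y₀) / lam) < 0 :=
        lt_of_le_of_lt (min_le_left _ _) (by norm_num)
      have h1 : min (-1) ((u - w y₀) / lam) ≤ (u - w y₀) / lam := min_le_right _ _
      have h2 : min (-1) ((u - w y₀) / lam) * lam ≥ u - w y₀ :=
        le_trans (le_of_eq (div_mul_cancel₀ (u - w y₀) (ne_of_lt hneg)).symm)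
          (mul_le_mul_of_nonpos_right h1 hneg.le)
      have h3 := hP_mem _ hr_neg y₀ hy₀
      linarith
    -- u ≤ w (G z₀)
    have huG : u ≤ w (G z₀) := by
      have hm := hQ_mem 0 (map_zero B)
      simpa using hm
    -- nontriviality
    have hnontriv : ¬(lam = 0 ∧ w = 0) := by
      rintro ⟨hl0, hw0⟩
      have h1 := hP_mem (-1) (by norm_num) y₀ hy₀
      rw [hl0, hw0] at h1
      simp only [ContinuousLinearMap.zero_apply, mul_zero, add_zero] at h1
      have h2 := huG
      rw [hw0] at h2
      simp only [ContinuousLinearMap.zero_apply] at h2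
      linarith
    -- normal cone property on the interior
    have hw_int : ∀ y ∈ interior K, w y ≤ u := by
      intro y hy
      refine le_of_forall_pos_le_add ?_
      intro ε hε
      have hl1 : 0 < lam + 1 := by linarith
      have hr_neg : -(ε / (lam + 1)) < 0 := by
        have : 0 < ε / (lam + 1) := div_pos hε hl1
        linarith
      have h1 := hP_mem _ hr_neg y hy
      have h2 : (ε / (lam + 1)) * lam ≤ ε := by
        rw [div_mul_eq_mul_div, div_le_iff₀ hl1]
        exact mul_le_mul_of_nonneg_left (by linarith) hε.le
      linarith
    have hw_K : ∀ k ∈ K, w k ≤ w (G z₀) := by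
      intro k hk
      refine le_of_forall_pos_le_add ?_
      intro ε hε
      obtain ⟨D, hD_nonneg, hD_lb⟩ : ∃ D : ℝ, 0 ≤ D ∧ -(D) ≤ w y₀ - w k :=
        ⟨|w y₀ - w k|, abs_nonneg _, neg_abs_le _⟩
      obtain ⟨sε, hs_pos, hs_le1, hs_le2⟩ :
          ∃ sε : ℝ, 0 < sε ∧ sε ≤ 1 ∧ sε * (D + 1) ≤ ε := by
        refine ⟨min 1 (ε / (D + 1)), lt_min one_pos (by positivity), min_le_left _ _, ?_⟩
        have h5 : min 1 (ε / (D + 1)) ≤ ε / (D + 1) := min_le_right _ _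
        rw [← le_div_iff₀ (by linarith)]
        exact h5
      have hmem : (1 - sε) • k + sε • y₀ ∈ interior K :=
        hKconv.combo_self_interior_mem_interior hk hy₀ (by linarith) hs_pos (by ring)
      have h1 := le_trans (hw_int _ hmem) huG
      rw [map_add, map_smul, map_smul, smul_eq_mul, smul_eq_mul] at h1
      have e1 : (1 - sε) * w k + sε * w y₀ = w k + sε * (w y₀ - w k) := by ring
      rw [e1] at h1
      have h2 := mul_le_mul_of_nonneg_left hD_lb hs_pos.le
      have e2 : sε * -(D) = -(sε * D) := by ring
      rw [e2] at h2
      have e3 : sε * (D + 1) = sε * D + sε := by ring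
      rw [e3] at hs_le2
      linarith
    -- the functional lam • A + w ∘ C vanishes on ker B
    obtain ⟨g, hg_def⟩ : ∃ g : Z →L[ℝ] ℝ, lam • A + w.comp C = g := ⟨_, rfl⟩
    have hg_app : ∀ z : Z, g z = lam * A z + w (C z) := by
      intro z
      rw [← hg_def]
      simp [smul_eq_mul]
    have hg_ker : ∀ h : Z, B h = 0 → g h = 0 := by
      intro h hh
      by_contra hne
      have hlb : ∀ h' : Z, B h' = 0 → u - w (G z₀) ≤ g h' := by
        intro h' hh'
        have hq := hQ_mem h' hh'
        rw [hg_app]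
        linarith
      have hch : B (((u - w (G z₀) - 1) / g h) • h) = 0 := by
        rw [map_smul, hh, smul_zero]
      have hc2 := hlb _ hch
      rw [map_smul, smul_eq_mul, div_mul_cancel₀ _ hne] at hc2
      linarith
    obtain ⟨e', he'⟩ := aux_factor B hsurj g hg_ker
    refine ⟨lam, -e', w, hlam_nonneg, ?_, ?_, ?_⟩
    · simp only [ne_eq, Prod.mk.injEq, not_and]
      intro hl0 _ hw0
      exact hnontriv ⟨hl0, hw0⟩
    · ext z
      have h1 : e' (B z) = g z := by
        rw [← he']; rfl
      have h2 := hg_app z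
      simp only [ContinuousLinearMap.add_apply, ContinuousLinearMap.coe_smul',
        Pi.smul_apply, ContinuousLinearMap.comp_apply, ContinuousLinearMap.zero_apply,
        ContinuousLinearMap.neg_apply, smul_eq_mul]
      rw [h1, h2]
      ring
    · intro k hk
      have hK := hw_K k hk
      rw [map_sub]
      linarith
end

section
/- Let Z, E, W be real Banach spaces, let a: Z → ℝ be a continuous linear functional, let T: Z → E be a surjective continuous linear map, let S: Z → W be a continuous linear map, let K ⊆ W be a convex set with nonempty interior, and let k₀ ∈ K. Define C ⊆ ℝ × E × W as the set of all triples (μ, e, w) for which there exists z ∈ Z with a(z) < μ, T(z) = e, and S(z) − w ∈ cone(int K − k₀), where cone(S) := {t·s : t > 0, s ∈ S}. Then C is an open convex subset of ℝ × E × W. -/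
/-- The set `C` of triples `(μ, e, w)` admitting `z` with
`a z < μ`, `T z = e`, and `S z − w ∈ cone(int K − k₀)` is open and convex. -/
theorem stmt3
    {Z E W : Type*}
    [NormedAddCommGroup Z] [NormedSpace ℝ Z] [CompleteSpace Z]
    [NormedAddCommGroup E] [NormedSpace ℝ E] [CompleteSpace E]
    [NormedAddCommGroup W] [NormedSpace ℝ W] [CompleteSpace W]
    (a : Z →L[ℝ] ℝ) (T : Z →L[ℝ] E) (S : Z →L[ℝ] W)
    (hTsurj : Function.Surjective T)
    (K : Set W) (hKconv : Convex ℝ K) (hKint : (interior K).Nonempty)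
    (k₀ : W) (hk₀ : k₀ ∈ K)
    (C : Set (ℝ × E × W))
    (hC : C = {p : ℝ × E × W | ∃ z : Z, a z < p.1 ∧ T z = p.2.1 ∧
      S z - p.2.2 ∈ {x : W | ∃ t : ℝ, 0 < t ∧ ∃ s ∈ interior K, x = t • (s - k₀)}}) :
    IsOpen C ∧ Convex ℝ C := by
  set Q : Set W := {x : W | ∃ t : ℝ, 0 < t ∧ ∃ s ∈ interior K, x = t • (s - k₀)} with hQdef
  -- Q is open
  have hQopen : IsOpen Q := by
    have hrw : Q = ⋃ t ∈ Set.Ioi (0:ℝ),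
        (fun x : W => t • x) '' ((fun w => w - k₀) '' interior K) := by
      ext x
      simp only [hQdef, Set.mem_setOf_eq, Set.mem_iUnion, Set.mem_Ioi, Set.mem_image]
      constructor
      · rintro ⟨t, ht, s, hs, rfl⟩
        exact ⟨t, ht, s - k₀, ⟨s, hs, rfl⟩, rfl⟩
      · rintro ⟨t, ht, _, ⟨s, hs, rfl⟩, rfl⟩
        exact ⟨t, ht, s, hs, rfl⟩
    rw [hrw]
    refine isOpen_biUnion fun t ht => ?_
    exact (Homeomorph.smulOfNeZero t (ne_of_gt ht)).isOpenMap _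
      ((Homeomorph.subRight k₀).isOpenMap _ isOpen_interior)
  -- Q is convex
  have hQconv : Convex ℝ Q := by
    rintro x ⟨t₁, ht₁, s₁, hs₁, rfl⟩ y ⟨t₂, ht₂, s₂, hs₂, rfl⟩ p q hp hq hpq
    have ht : (0:ℝ) < p * t₁ + q * t₂ := by
      rcases hp.lt_or_eq with h | h
      · exact add_pos_of_pos_of_nonneg (mul_pos h ht₁) (mul_nonneg hq ht₂.le)
      · have hq1 : q = 1 := by linarith
        simpa [← h, hq1] using ht₂
    have htne : p * t₁ + q * t₂ ≠ 0 := ne_of_gt ht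
    refine ⟨p * t₁ + q * t₂, ht,
      (p * t₁ / (p * t₁ + q * t₂)) • s₁ + (q * t₂ / (p * t₁ + q * t₂)) • s₂, ?_, ?_⟩
    · exact hKconv.interior hs₁ hs₂
        (div_nonneg (mul_nonneg hp ht₁.le) ht.le)
        (div_nonneg (mul_nonneg hq ht₂.le) ht.le)
        (by field_simp)
    · match_scalars <;> field_simp <;> ring
  -- the linear map Φ
  let p₁ : (Z × ℝ × W) →L[ℝ] Z := ContinuousLinearMap.fst ℝ Z (ℝ × W)
  let p₂ : (Z × ℝ × W) →L[ℝ] ℝ :=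
    (ContinuousLinearMap.fst ℝ ℝ W).comp (ContinuousLinearMap.snd ℝ Z (ℝ × W))
  let p₃ : (Z × ℝ × W) →L[ℝ] W :=
    (ContinuousLinearMap.snd ℝ ℝ W).comp (ContinuousLinearMap.snd ℝ Z (ℝ × W))
  let Φ : (Z × ℝ × W) →L[ℝ] (ℝ × E × W) :=
    (a.comp p₁ + p₂).prod ((T.comp p₁).prod (S.comp p₁ - p₃))
  have hΦ : ∀ v : Z × ℝ × W, Φ v = (a v.1 + v.2.1, T v.1, S v.1 - v.2.2) := by
    intro v; rfl
  have hΦsurj : Function.Surjective Φ := by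
    rintro ⟨μ, e, w⟩
    obtain ⟨z, hz⟩ := hTsurj e
    refine ⟨(z, μ - a z, S z - w), ?_⟩
    rw [hΦ]
    refine Prod.ext ?_ (Prod.ext ?_ ?_)
    · show a z + (μ - a z) = μ; ring
    · exact hz
    · show S z - (S z - w) = w; abel
  have hCim : C = Φ '' ((Set.univ : Set Z) ×ˢ (Set.Ioi (0:ℝ) ×ˢ Q)) := by
    rw [hC]
    ext ⟨μ, e, w⟩
    simp only [Set.mem_setOf_eq, Set.mem_image, Set.mem_prod, Set.mem_univ, true_and,
      Set.mem_Ioi, hΦ, Prod.mk.injEq]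
    constructor
    · rintro ⟨z, hz1, hz2, hz3⟩
      refine ⟨(z, μ - a z, S z - w), ⟨sub_pos.mpr hz1, hz3⟩, ?_, hz2, ?_⟩
      · show a z + (μ - a z) = μ; ring
      · show S z - (S z - w) = w; abel
    · rintro ⟨⟨z, r, v⟩, ⟨hr, hv⟩, h1, h2, h3⟩
      refine ⟨z, ?_, h2, ?_⟩
      · have h1' : a z + r = μ := h1
        have hr' : (0:ℝ) < r := hr
        linarith
      · have h3' : S z - v = w := h3
        rw [← h3', sub_sub_cancel]
        exact hv
  have hopen : IsOpen ((Set.univ : Set Z) ×ˢ (Set.Ioi (0:ℝ) ×ˢ Q)) :=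
    isOpen_univ.prod ((isOpen_Ioi).prod hQopen)
  have hconv : Convex ℝ ((Set.univ : Set Z) ×ˢ (Set.Ioi (0:ℝ) ×ˢ Q)) :=
    convex_univ.prod ((convex_Ioi 0).prod hQconv)
  exact ⟨hCim ▸ (ContinuousLinearMap.isOpenMap Φ hΦsurj) _ hopen,
    hCim ▸ hconv.linear_image (Φ : (Z × ℝ × W) →ₗ[ℝ] (ℝ × E × W))⟩
end

section
/- Let Z, E, W be real Banach spaces, let T: Z → E be a surjective continuous linear map, let S: Z → W be a continuous linear map, let K ⊆ W be a convex set with nonempty interior, and let k₀ ∈ K. Assume there exists z̃ ∈ Z with T(z̃) = 0 and k₀ + S(z̃) ∈ int K. If continuous linear functionals e* on E and w* on W satisfy e* ∘ T + w* ∘ S = 0 (as a functional on Z) and w* ∈ N(K, k₀), then e* = 0 and w* = 0. -/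
/-- If the Robinson-type condition holds (`T` surjective and there is
`z̃ ∈ ker T` with `k₀ + S z̃ ∈ int K`), then the only multipliers `(e*, w*)` with
`e* ∘ T + w* ∘ S = 0` and `w* ∈ N(K, k₀)` are the trivial ones. -/
theorem stmt4
    {Z E W : Type*}
    [NormedAddCommGroup Z] [NormedSpace ℝ Z] [CompleteSpace Z]
    [NormedAddCommGroup E] [NormedSpace ℝ E] [CompleteSpace E]
    [NormedAddCommGroup W] [NormedSpace ℝ W] [CompleteSpace W]
    (T : Z →L[ℝ] E) (S : Z →L[ℝ] W)
    (hTsurj : Function.Surjective T)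
    (K : Set W) (hKconv : Convex ℝ K) (hKint : (interior K).Nonempty)
    (k₀ : W) (hk₀ : k₀ ∈ K)
    (zt : Z) (hzt : T zt = 0) (hzt' : k₀ + S zt ∈ interior K)
    (e : E →L[ℝ] ℝ) (w : W →L[ℝ] ℝ)
    (hsum : e.comp T + w.comp S = 0)
    (hw : ∀ k ∈ K, w (k - k₀) ≤ 0) :
    e = 0 ∧ w = 0 := by
  have hwSzt : w (S zt) = 0 := by
    have h1 := congrFun (congrArg DFunLike.coe hsum) zt
    simp [hzt] at h1
    exact h1
  have hw0 : w = 0 := by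
    ext v
    have hcont : ∀ᶠ t : ℝ in nhds 0, k₀ + S zt + t • v ∈ K := by
      have hc : Continuous fun t : ℝ => k₀ + S zt + t • v := by continuity
      have hmem : K ∈ nhds (k₀ + S zt + (0:ℝ) • v) := by
        simpa using mem_interior_iff_mem_nhds.mp hzt'
      exact hc.continuousAt (x := 0) hmem
    have key : ∀ᶠ t : ℝ in nhds 0, t * w v ≤ 0 := by
      filter_upwards [hcont] with t ht
      have h2 := hw _ ht
      have h3 : k₀ + S zt + t • v - k₀ = S zt + t • v := by abel
      rw [h3] at h2
      simpa [map_add, map_smul, hwSzt] using h2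
    rcases Metric.eventually_nhds_iff.mp key with ⟨δ, hδ, hball⟩
    have hp : (δ/2) * w v ≤ 0 := hball (by rw [Real.dist_eq]; rw [abs_sub_comm]; simp [abs_of_pos, abs_of_neg, hδ])
    have hn : (-(δ/2)) * w v ≤ 0 := hball (by rw [Real.dist_eq]; rw [abs_sub_comm]; simp [abs_of_pos, abs_of_neg, hδ])
    have : w v = 0 := by nlinarith
    simpa using this
  have he0 : e = 0 := by
    ext x
    obtain ⟨z, rfl⟩ := hTsurj x
    have h1 := congrFun (congrArg DFunLike.coe hsum) z
    simp [hw0] at h1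
    simpa using h1
  exact ⟨he0, hw0⟩
end

section
/- Let (Q, μ) be a measure space with μ σ-finite, let e ∈ L¹(μ) be real-valued, and let h ∈ L^∞(μ) be real-valued with h ≤ 0 μ-almost everywhere. Suppose that for every real-valued η ∈ L^∞(μ) with η ≤ 0 μ-almost everywhere one has ∫ e·(η − h) dμ ≤ 0. Then e ≥ 0 μ-almost everywhere and e·h = 0 μ-almost everywhere. -/
open MeasureTheory

/-- Pointwise complementarity from a variational inequality: if
`∫ e·(η − h) dμ ≤ 0` for every nonpositive `η ∈ L^∞`, then `e ≥ 0` a.e. and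
`e·h = 0` a.e. -/
theorem stmt7
    {Q : Type*} [MeasurableSpace Q] (μ : Measure Q) [SigmaFinite μ]
    (e h : Q → ℝ)
    (he : Integrable e μ)
    (hh : MemLp h ⊤ μ)
    (hh0 : ∀ᵐ q ∂μ, h q ≤ 0)
    (hvar : ∀ η : Q → ℝ, MemLp η ⊤ μ → (∀ᵐ q ∂μ, η q ≤ 0) →
      ∫ q, e q * (η q - h q) ∂μ ≤ 0) :
    (∀ᵐ q ∂μ, 0 ≤ e q) ∧ (∀ᵐ q ∂μ, e q * h q = 0) := by
  -- measurable representative of e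
  set e' := he.1.mk e with he'def
  have he'm : StronglyMeasurable e' := he.1.stronglyMeasurable_mk
  have hee' : e =ᵐ[μ] e' := he.1.ae_eq_mk
  set A : Set Q := {q | e' q < 0} with hA
  have hAm : MeasurableSet A := he'm.measurable measurableSet_Iio
  -- test function η = h - 1_A
  have hη : MemLp (fun q => h q - A.indicator (fun _ => (1:ℝ)) q) ⊤ μ := by
    refine hh.sub ?_
    refine memLp_top_of_bound ?_ 1 (Filter.Eventually.of_forall fun q => ?_)
    · exact (stronglyMeasurable_const.indicator hAm).aestronglyMeasurable
    · by_cases hq : q ∈ A <;> simp [Set.indicator_apply, hq]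
  have hη0 : ∀ᵐ q ∂μ, h q - A.indicator (fun _ => (1:ℝ)) q ≤ 0 := by
    filter_upwards [hh0] with q hq
    have : (0:ℝ) ≤ A.indicator (fun _ => (1:ℝ)) q := by
      by_cases hqA : q ∈ A <;> simp [Set.indicator_apply, hqA]
    linarith
  have key := hvar _ hη hη0
  have hsimp : (fun q => e q * ((h q - A.indicator (fun _ => (1:ℝ)) q) - h q))
      = fun q => -(A.indicator e q) := by
    funext q
    by_cases hq : q ∈ A <;> simp [Set.indicator_apply, hq]
  rw [hsimp] at key
  have hintA : (0:ℝ) ≤ ∫ q in A, e q ∂μ := by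
    rw [integral_neg] at key
    rwa [integral_indicator hAm, neg_nonpos] at key
  -- ∫_A e' = ∫_A e ≥ 0, but e' < 0 on A ⇒ μ A = 0
  have hee'A : e =ᵐ[μ.restrict A] e' := ae_restrict_of_ae hee'
  have hintA' : (0:ℝ) ≤ ∫ q in A, e' q ∂μ := by
    rwa [integral_congr_ae hee'A] at hintA
  have heA : IntegrableOn e' A μ := ((he.congr hee').restrict)
  have hneg : ∀ᵐ q ∂μ.restrict A, 0 ≤ (-e') q := by
    refine (ae_restrict_iff' hAm).mpr (Filter.Eventually.of_forall fun q hq => ?_)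
    simpa using le_of_lt hq
  have hint0 : ∫ q in A, (-e') q ∂μ = 0 := by
    have h1 : ∫ q in A, (-e') q ∂μ ≤ 0 := by
      simp only [Pi.neg_apply, integral_neg]; linarith
    have h2 : 0 ≤ ∫ q in A, (-e') q ∂μ := setIntegral_nonneg_of_ae_restrict hneg
    linarith
  have hzero : (-e') =ᵐ[μ.restrict A] 0 :=
    (integral_eq_zero_iff_of_nonneg_ae hneg heA.neg).mp hint0
  have hμA : μ A = 0 := by
    by_contra hne
    have : ∀ᵐ q ∂μ.restrict A, q ∈ A := (ae_restrict_iff' hAm).mpr (ae_of_all _ fun q hq => hq)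
    have hcontra : ∀ᵐ q ∂μ.restrict A, False := by
      filter_upwards [hzero, this] with q h1 h2
      have : e' q = 0 := by simpa [neg_eq_zero] using h1
      exact absurd this (ne_of_lt h2)
    rw [ae_iff] at hcontra
    simp only [not_false_iff] at hcontra
    have : μ.restrict A Set.univ = 0 := by simpa using hcontra
    rw [Measure.restrict_apply_univ] at this
    exact hne this
  have hepos : ∀ᵐ q ∂μ, 0 ≤ e q := by
    have he'pos : ∀ᵐ q ∂μ, 0 ≤ e' q := by
      have : ∀ᵐ q ∂μ, q ∉ A := (ae_iff.mpr (by simpa [hA] using hμA))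
      filter_upwards [this] with q hq
      simpa [hA, not_lt] using hq
    filter_upwards [hee', he'pos] with q h1 h2
    rw [h1]; exact h2
  refine ⟨hepos, ?_⟩
  -- integrability of e*h
  have hih : Integrable (fun q => e q * h q) μ := by
    exact (he.smul_of_top_right hh : Integrable (fun q => h q * e q) μ).congr (Filter.Eventually.of_forall fun q => mul_comm _ _)
  -- test with η = 2h and η = 0 to get ∫ e h = 0
  have h2h : MemLp (fun q => 2 * h q) ⊤ μ := by
    exact hh.const_smul (2:ℝ)
  have h2h0 : ∀ᵐ q ∂μ, 2 * h q ≤ 0 := by filter_upwards [hh0] with q hq; linarith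
  have k1 := hvar _ h2h h2h0
  have k2 := hvar (fun _ => 0) (memLp_top_const 0) (ae_of_all _ fun _ => le_refl 0)
  have e1 : (fun q => e q * (2 * h q - h q)) = fun q => e q * h q := by
    funext q; ring
  have e2 : (fun q => e q * ((0:ℝ) - h q)) = fun q => -(e q * h q) := by
    funext q; ring
  rw [e1] at k1
  rw [e2, integral_neg] at k2
  have hint : ∫ q, e q * h q ∂μ = 0 := le_antisymm k1 (by linarith)
  -- e*h ≤ 0 a.e., integral zero ⇒ e*h = 0 a.e.
  have hnn : ∀ᵐ q ∂μ, 0 ≤ -(e q * h q) := by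
    filter_upwards [hepos, hh0] with q h1 h2
    nlinarith
  have : (fun q => -(e q * h q)) =ᵐ[μ] 0 := by
    refine (integral_eq_zero_iff_of_nonneg_ae hnn hih.neg).mp ?_
    rw [integral_neg, hint, neg_zero]
  filter_upwards [this] with q hq
  simpa [neg_eq_zero] using hq
end

section
/- Let Q be a bounded subset of ℝ^d, let α ∈ (0, 1], and let M > 0, γ₁ > 0, k > 0 be constants. Let ū, ȳ, Φ: Q → ℝ be functions with |ȳ(q)| ≤ M and |ū(q)| ≤ M for all q ∈ Q, and let g: Q × ℝ × ℝ → ℝ (playing the role of the partial derivative L_u of the integrand) satisfy: (i) strong monotonicity in the third variable: (g(q, y, u₁) − g(q, y, u₂))·(u₁ − u₂) ≥ γ₁·(u₁ − u₂)² for all q ∈ Q, all y with |y| ≤ M, and all u₁, u₂ with |u₁|, |u₂| ≤ M; (ii) joint Lipschitz continuity in the first two variables: |g(q₁, y₁, u) − g(q₂, y₂, u)| ≤ k·(‖q₁ − q₂‖ + |y₁ − y₂|) for all q₁, q₂ ∈ Q, all y₁, y₂ with |y₁|, |y₂| ≤ M, and all u with |u| ≤ M; (iii) ȳ and Φ are Hölder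 continuous on Q with exponent α; (iv) the stationarity identity g(q, ȳ(q), ū(q)) = Φ(q) holds for all q ∈ Q. Then ū is Hölder continuous on Q with exponent α, i.e. there exists a constant C ≥ 0 such that |ū(q₁) − ū(q₂)| ≤ C·‖q₁ − q₂‖^α for all q₁, q₂ ∈ Q. -/
/-- Hölder continuity of the optimal control from the stationarity
identity, strong monotonicity of `L_u` in `u` and Hölder continuity of the
optimal state and of the multiplier function `Φ`. -/
theorem stmt9
    {d : ℕ} (Q : Set (EuclideanSpace ℝ (Fin d)))
    (hQbdd : Bornology.IsBounded Q)
    (α : ℝ) (hα0 : 0 < α) (hα1 : α ≤ 1)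
    (M γ₁ k : ℝ) (hM : 0 < M) (hγ₁ : 0 < γ₁) (hk : 0 < k)
    (ubar ybar Φ : EuclideanSpace ℝ (Fin d) → ℝ)
    (hybdd : ∀ q ∈ Q, |ybar q| ≤ M) (hubdd : ∀ q ∈ Q, |ubar q| ≤ M)
    (g : EuclideanSpace ℝ (Fin d) → ℝ → ℝ → ℝ)
    -- (i) strong monotonicity in the third variable
    (hmono : ∀ q ∈ Q, ∀ y : ℝ, |y| ≤ M → ∀ u₁ u₂ : ℝ, |u₁| ≤ M → |u₂| ≤ M →
      γ₁ * (u₁ - u₂) ^ 2 ≤ (g q y u₁ - g q y u₂) * (u₁ - u₂))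
    -- (ii) joint Lipschitz continuity in the first two variables
    (hlip : ∀ q₁ ∈ Q, ∀ q₂ ∈ Q, ∀ y₁ y₂ : ℝ, |y₁| ≤ M → |y₂| ≤ M →
      ∀ u : ℝ, |u| ≤ M →
      |g q₁ y₁ u - g q₂ y₂ u| ≤ k * (‖q₁ - q₂‖ + |y₁ - y₂|))
    -- (iii) Hölder continuity of `ybar` and `Φ` on `Q`
    (hyHold : ∃ Cy : ℝ, 0 ≤ Cy ∧ ∀ q₁ ∈ Q, ∀ q₂ ∈ Q,
      |ybar q₁ - ybar q₂| ≤ Cy * ‖q₁ - q₂‖ ^ α)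
    (hΦHold : ∃ CΦ : ℝ, 0 ≤ CΦ ∧ ∀ q₁ ∈ Q, ∀ q₂ ∈ Q,
      |Φ q₁ - Φ q₂| ≤ CΦ * ‖q₁ - q₂‖ ^ α)
    -- (iv) stationarity identity
    (hstat : ∀ q ∈ Q, g q (ybar q) (ubar q) = Φ q) :
    ∃ C : ℝ, 0 ≤ C ∧ ∀ q₁ ∈ Q, ∀ q₂ ∈ Q,
      |ubar q₁ - ubar q₂| ≤ C * ‖q₁ - q₂‖ ^ α := by
  obtain ⟨Cy, hCy, hy⟩ := hyHold
  obtain ⟨CΦ, hCΦ, hΦ⟩ := hΦHold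
  obtain ⟨D0, hD0⟩ := Metric.isBounded_iff.mp hQbdd
  set D : ℝ := max D0 1 with hD
  have hD1 : (1:ℝ) ≤ D := le_max_right _ _
  have hDpos : (0:ℝ) < D := lt_of_lt_of_le one_pos hD1
  set K : ℝ := (CΦ + k * D + k * Cy) / γ₁ with hK
  have hKnn : 0 ≤ K := by
    apply div_nonneg _ hγ₁.le
    have := hk.le
    nlinarith [hDpos.le]
  refine ⟨K, hKnn, ?_⟩
  intro q₁ h₁ q₂ h₂
  set r : ℝ := ‖q₁ - q₂‖ with hr
  have hrnn : 0 ≤ r := norm_nonneg _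
  rcases eq_or_lt_of_le hrnn with hr0 | hrpos
  · -- q₁ = q₂
    have : q₁ = q₂ := by
      rwa [eq_comm, norm_eq_zero, sub_eq_zero] at hr0
    subst this
    simp [sub_self]
    positivity
  · -- r > 0
    have hrD : r ≤ D := by
      have := hD0 h₁ h₂
      rw [dist_eq_norm] at this
      exact le_trans this (le_max_left _ _)
    have hrle : r ≤ D * r ^ α := by
      have h1 : r = r ^ ((1 - α) + α) := by
        rw [sub_add_cancel, Real.rpow_one]
      have h2 : r ^ ((1 - α) + α) = r ^ (1 - α) * r ^ α := Real.rpow_add hrpos _ _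
      have h3 : r ^ (1 - α) ≤ D ^ (1 - α) :=
        Real.rpow_le_rpow hrnn hrD (by linarith)
      have h4 : D ^ (1 - α) ≤ D := by
        calc D ^ (1 - α) ≤ D ^ (1:ℝ) :=
              Real.rpow_le_rpow_of_exponent_le hD1 (by linarith)
          _ = D := Real.rpow_one D
      have h5 : 0 ≤ r ^ α := Real.rpow_nonneg hrnn α
      calc r = r ^ (1 - α) * r ^ α := by rw [← h2, ← h1]
        _ ≤ D * r ^ α := by nlinarith
    set t : ℝ := |ubar q₁ - ubar q₂| with ht
    have htnn : 0 ≤ t := abs_nonneg _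
    rcases eq_or_lt_of_le htnn with ht0 | htpos
    · rw [← ht0]
      positivity
    -- main estimate
    have hmain : γ₁ * t ^ 2 ≤ (CΦ + k * D + k * Cy) * r ^ α * t := by
      have hmo := hmono q₁ h₁ (ybar q₁) (hybdd q₁ h₁) (ubar q₁) (ubar q₂)
        (hubdd q₁ h₁) (hubdd q₂ h₂)
      have hst : γ₁ * (ubar q₁ - ubar q₂) ^ 2 ≤
          (g q₁ (ybar q₁) (ubar q₁) - g q₁ (ybar q₁) (ubar q₂)) * (ubar q₁ - ubar q₂) :=
        hmo
      have hΔ : |g q₁ (ybar q₁) (ubar q₁) - g q₁ (ybar q₁) (ubar q₂)| ≤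
          (CΦ + k * D + k * Cy) * r ^ α := by
        have e1 : g q₁ (ybar q₁) (ubar q₁) - g q₁ (ybar q₁) (ubar q₂)
            = (Φ q₁ - Φ q₂) + (g q₂ (ybar q₂) (ubar q₂) - g q₁ (ybar q₁) (ubar q₂)) := by
          rw [hstat q₁ h₁, hstat q₂ h₂]; ring
        rw [e1]
        have h6 := hΦ q₁ h₁ q₂ h₂
        have h7 : |g q₂ (ybar q₂) (ubar q₂) - g q₁ (ybar q₁) (ubar q₂)| ≤
            k * (r + |ybar q₂ - ybar q₁|) := by
          have := hlip q₂ h₂ q₁ h₁ (ybar q₂) (ybar q₁) (hybdd q₂ h₂) (hybdd q₁ h₁)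
            (ubar q₂) (hubdd q₂ h₂)
          rwa [show ‖q₂ - q₁‖ = r by rw [hr, norm_sub_rev]] at this
        have h8 : |ybar q₂ - ybar q₁| ≤ Cy * r ^ α := hy q₂ h₂ q₁ h₁ |>.trans
          (by rw [hr, norm_sub_rev])
        have h9 : 0 ≤ r ^ α := Real.rpow_nonneg hrnn α
        calc |(Φ q₁ - Φ q₂) + (g q₂ (ybar q₂) (ubar q₂) - g q₁ (ybar q₁) (ubar q₂))|
            ≤ |Φ q₁ - Φ q₂| + |g q₂ (ybar q₂) (ubar q₂) - g q₁ (ybar q₁) (ubar q₂)| :=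
              abs_add_le _ _
          _ ≤ CΦ * r ^ α + k * (r + Cy * r ^ α) := by
              have := hk.le; nlinarith
          _ ≤ (CΦ + k * D + k * Cy) * r ^ α := by
              have := hk.le; nlinarith
      have h10 : (g q₁ (ybar q₁) (ubar q₁) - g q₁ (ybar q₁) (ubar q₂)) * (ubar q₁ - ubar q₂)
          ≤ |g q₁ (ybar q₁) (ubar q₁) - g q₁ (ybar q₁) (ubar q₂)| * t := by
        rw [ht, ← abs_mul]
        exact le_abs_self _
      have h11 : γ₁ * t ^ 2 = γ₁ * (ubar q₁ - ubar q₂) ^ 2 := by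
        rw [ht, sq_abs]
      rw [h11]
      calc γ₁ * (ubar q₁ - ubar q₂) ^ 2 ≤ _ := hst
        _ ≤ |g q₁ (ybar q₁) (ubar q₁) - g q₁ (ybar q₁) (ubar q₂)| * t := h10
        _ ≤ (CΦ + k * D + k * Cy) * r ^ α * t := by nlinarith
    -- conclude t ≤ K r^α
    have : γ₁ * t ≤ (CΦ + k * D + k * Cy) * r ^ α := by
      nlinarith
    rw [hK]
    rw [div_mul_eq_mul_div, le_div_iff₀ hγ₁]
    nlinarith
end
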